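/- The transformation formulas relating (μ₁, μ₂) to the conformal coordinates are mutually inverse: if A = (Z₁+Z₂)/2, B = (Z₁-Z₂)/(2i) with Z₁, Z₂ defined from (μ₁,μ₂) by Z₁ = [(1+|μ₂|²)μ̄₁ + (1+|μ₁|²)μ̄₂ + i((1-|μ₂|²)μ̄₁ - (1-|μ₁|²)μ̄₂)]/(1-|μ₁|²|μ₂|²) and Z₂ the same with -i, then μ₁ = (Ā+B̄)/2 - ((Ā-B̄)/(2|A-B|²))(|A|²-|B|²+2 - √((|A|²-|B|²+2)² - |A-B|²|A+B|²)) and μ₂ = (Ā-B̄)/2 - ((Ā+B̄)/(2|A+B|²))(|A|²-|B|²+2 - √((|A|²-|B|²+2)² - |A-B|²|A+B|²)). -/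

import Mathlib

open Complex

/-- The conformal coordinate map `(μ₁,μ₂) ↦ (Z₁,Z₂)` on the space of oriented geodesics
of hyperbolic 3-space. -/
noncomputable def geodCoord (μ : ℂ × ℂ) : ℂ × ℂ :=
  let m₁ := μ.1; let m₂ := μ.2
  let den : ℂ := 1 - m₁ * (starRingEnd ℂ) m₁ * m₂ * (starRingEnd ℂ) m₂
  let a : ℂ := (1 + m₂ * (starRingEnd ℂ) m₂) * (starRingEnd ℂ) m₁
    + (1 + m₁ * (starRingEnd ℂ) m₁) * (starRingEnd ℂ) m₂
  let b : ℂ := (1 - m₂ * (starRingEnd ℂ) m₂) * (starRingEnd ℂ) m₁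
    - (1 - m₁ * (starRingEnd ℂ) m₁) * (starRingEnd ℂ) m₂
  ((a + I * b) / den, (a - I * b) / den)

set_option maxHeartbeats 1000000 in
/-- The transformation formulas between `(μ₁,μ₂)` and the conformal coordinates
`(Z₁,Z₂)` are mutually inverse: with `A = (Z₁+Z₂)/2`, `B = (Z₁−Z₂)/(2i)`, the quantity
under the square root is nonnegative and the stated inversion formulas recover
`μ₁` and `μ₂` (where the denominators `|A∓B|²` are nonzero). -/
theorem geodCoord_inverse_formulas
    (μ₁ μ₂ : ℂ) (hmod : ‖μ₁‖ * ‖μ₂‖ < 1)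
    (hden : 1 + μ₁ * (starRingEnd ℂ) μ₂ ≠ 0) :
    let Z := geodCoord (μ₁, μ₂)
    let A : ℂ := (Z.1 + Z.2) / 2
    let B : ℂ := (Z.1 - Z.2) / (2 * I)
    let D : ℝ := (Complex.normSq A - Complex.normSq B + 2) ^ 2
      - Complex.normSq (A - B) * Complex.normSq (A + B)
    0 ≤ D ∧
    (A - B ≠ 0 →
      μ₁ = ((starRingEnd ℂ) A + (starRingEnd ℂ) B) / 2
        - ((starRingEnd ℂ) A - (starRingEnd ℂ) B) / (2 * (Complex.normSq (A - B) : ℂ))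
          * ((Complex.normSq A : ℂ) - (Complex.normSq B : ℂ) + 2 - (Real.sqrt D : ℂ))) ∧
    (A + B ≠ 0 →
      μ₂ = ((starRingEnd ℂ) A - (starRingEnd ℂ) B) / 2
        - ((starRingEnd ℂ) A + (starRingEnd ℂ) B) / (2 * (Complex.normSq (A + B) : ℂ))
          * ((Complex.normSq A : ℂ) - (Complex.normSq B : ℂ) + 2 - (Real.sqrt D : ℂ))) := by
  intro Z A B D
  have hDdef : D = (Complex.normSq A - Complex.normSq B + 2) ^ 2
      - Complex.normSq (A - B) * Complex.normSq (A + B) := rfl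
  -- basic nonvanishing facts
  have hs : Complex.normSq μ₁ * Complex.normSq μ₂ < 1 := by
    rw [Complex.normSq_eq_norm_sq, Complex.normSq_eq_norm_sq]
    nlinarith [norm_nonneg μ₁, norm_nonneg μ₂,
      mul_nonneg (norm_nonneg μ₁) (norm_nonneg μ₂)]
  have hu : (0:ℝ) < 1 - Complex.normSq μ₁ * Complex.normSq μ₂ := by linarith
  have hdenu : (1 : ℂ) - μ₁ * (starRingEnd ℂ) μ₁ * μ₂ * (starRingEnd ℂ) μ₂
      = ((1 - Complex.normSq μ₁ * Complex.normSq μ₂ : ℝ) : ℂ) := by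
    push_cast
    rw [← Complex.mul_conj, ← Complex.mul_conj]
    ring
  have hden0 : (1 : ℂ) - μ₁ * (starRingEnd ℂ) μ₁ * μ₂ * (starRingEnd ℂ) μ₂ ≠ 0 := by
    rw [hdenu]
    exact_mod_cast ne_of_gt hu
  have hden2 : (1 : ℂ) + (starRingEnd ℂ) μ₁ * μ₂ ≠ 0 := by
    intro h
    apply hden
    have := congrArg (starRingEnd ℂ) h
    simpa using this
  -- explicit formulas for A and B
  have hA : A = ((1 + μ₂ * (starRingEnd ℂ) μ₂) * (starRingEnd ℂ) μ₁
      + (1 + μ₁ * (starRingEnd ℂ) μ₁) * (starRingEnd ℂ) μ₂)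
      / (1 - μ₁ * (starRingEnd ℂ) μ₁ * μ₂ * (starRingEnd ℂ) μ₂) := by
    show ((geodCoord (μ₁, μ₂)).1 + (geodCoord (μ₁, μ₂)).2) / 2 = _
    simp only [geodCoord]
    field_simp
    ring
  have hB : B = ((1 - μ₂ * (starRingEnd ℂ) μ₂) * (starRingEnd ℂ) μ₁
      - (1 - μ₁ * (starRingEnd ℂ) μ₁) * (starRingEnd ℂ) μ₂)
      / (1 - μ₁ * (starRingEnd ℂ) μ₁ * μ₂ * (starRingEnd ℂ) μ₂) := by
    show ((geodCoord (μ₁, μ₂)).1 - (geodCoord (μ₁, μ₂)).2) / (2 * I) = _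
    simp only [geodCoord]
    field_simp
    ring
  -- abstract the denominator
  set d : ℂ := 1 - μ₁ * (starRingEnd ℂ) μ₁ * μ₂ * (starRingEnd ℂ) μ₂ with hd
  have hconjd : (starRingEnd ℂ) d = d := by
    rw [hd]
    simp only [map_sub, map_mul, map_one, Complex.conj_conj]
    ring
  -- the value of D
  have hD' : D = (2 * Complex.normSq (1 + μ₁ * (starRingEnd ℂ) μ₂)
      / (1 - Complex.normSq μ₁ * Complex.normSq μ₂)) ^ 2 := by
    have h : ((D : ℝ) : ℂ) = (((2 * Complex.normSq (1 + μ₁ * (starRingEnd ℂ) μ₂)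
        / (1 - Complex.normSq μ₁ * Complex.normSq μ₂)) ^ 2 : ℝ) : ℂ) := by
      rw [hDdef]
      push_cast [← Complex.mul_conj]
      rw [show (1:ℂ) - μ₁ * (starRingEnd ℂ) μ₁ * (μ₂ * (starRingEnd ℂ) μ₂) = d from by
        rw [hd]; ring]
      rw [hA, hB]
      simp only [map_add, map_sub, map_mul, map_div₀, map_one, map_ofNat, Complex.conj_conj,
        hconjd]
      field_simp
      rw [hd]
      ring
    exact_mod_cast h
  have hsqrt : Real.sqrt D = 2 * Complex.normSq (1 + μ₁ * (starRingEnd ℂ) μ₂)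
      / (1 - Complex.normSq μ₁ * Complex.normSq μ₂) := by
    rw [hD']
    exact Real.sqrt_sq (div_nonneg (mul_nonneg (by norm_num) (Complex.normSq_nonneg _)) hu.le)
  set T : ℂ := (1 + μ₁ * (starRingEnd ℂ) μ₂) * (1 + (starRingEnd ℂ) μ₁ * μ₂) with hT
  have hT0 : T ≠ 0 := mul_ne_zero hden hden2
  clear_value d T
  -- cast versions of the key quantities
  have hKeyC : ((Complex.normSq A : ℂ) - (Complex.normSq B : ℂ) + 2 - (Real.sqrt D : ℂ))
      = 4 * (μ₁ * (starRingEnd ℂ) μ₁ * (μ₂ * (starRingEnd ℂ) μ₂))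
        * T / d ^ 2 := by
    rw [hT, hsqrt]
    push_cast [← Complex.mul_conj]
    rw [show (1:ℂ) - μ₁ * (starRingEnd ℂ) μ₁ * (μ₂ * (starRingEnd ℂ) μ₂) = d from by
      rw [hd]; ring]
    rw [hA, hB]
    simp only [map_add, map_sub, map_mul, map_div₀, map_one, map_ofNat, Complex.conj_conj,
      hconjd]
    field_simp
    rw [hd]
    ring
  have hNmC : ((Complex.normSq (A - B) : ℝ) : ℂ)
      = 4 * (μ₂ * (starRingEnd ℂ) μ₂)
        * T / d ^ 2 := by
    rw [hT, ← Complex.mul_conj]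
    rw [hA, hB]
    simp only [map_add, map_sub, map_mul, map_div₀, map_one, map_ofNat, Complex.conj_conj,
      hconjd]
    field_simp
    ring
  have hNpC : ((Complex.normSq (A + B) : ℝ) : ℂ)
      = 4 * (μ₁ * (starRingEnd ℂ) μ₁)
        * T / d ^ 2 := by
    rw [hT, ← Complex.mul_conj]
    rw [hA, hB]
    simp only [map_add, map_sub, map_mul, map_div₀, map_one, map_ofNat, Complex.conj_conj,
      hconjd]
    field_simp
    ring
  refine ⟨by rw [hD']; exact sq_nonneg _, ?_, ?_⟩
  · intro h
    have hm2 : μ₂ ≠ 0 := by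
      intro h0
      apply h
      rw [hA, hB, h0]
      simp
    have hc2 : (starRingEnd ℂ) μ₂ ≠ 0 := by simpa using hm2
    have h2N : (2 : ℂ) * (4 * (μ₂ * (starRingEnd ℂ) μ₂) * T / d ^ 2) ≠ 0 :=
      mul_ne_zero two_ne_zero (div_ne_zero
        (mul_ne_zero (mul_ne_zero (by norm_num) (mul_ne_zero hm2 hc2)) hT0)
        (pow_ne_zero _ hden0))
    have hterm : ((starRingEnd ℂ) A - (starRingEnd ℂ) B) / (2 * (Complex.normSq (A - B) : ℂ))
          * ((Complex.normSq A : ℂ) - (Complex.normSq B : ℂ) + 2 - (Real.sqrt D : ℂ))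
        = ((starRingEnd ℂ) A - (starRingEnd ℂ) B) * (μ₁ * (starRingEnd ℂ) μ₁) / 2 := by
      rw [hKeyC, hNmC, div_mul_eq_mul_div, div_eq_div_iff h2N two_ne_zero]
      field_simp [hden0]
    rw [hterm, hA, hB]
    simp only [map_add, map_sub, map_mul, map_div₀, map_one, map_ofNat, Complex.conj_conj,
      hconjd]
    field_simp [hden0]
    rw [hd]
    ring
  · intro h
    have hm1 : μ₁ ≠ 0 := by
      intro h0
      apply h
      rw [hA, hB, h0]
      simp
      try ring
    have hc1 : (starRingEnd ℂ) μ₁ ≠ 0 := by simpa using hm1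
    have h2N : (2 : ℂ) * (4 * (μ₁ * (starRingEnd ℂ) μ₁) * T / d ^ 2) ≠ 0 :=
      mul_ne_zero two_ne_zero (div_ne_zero
        (mul_ne_zero (mul_ne_zero (by norm_num) (mul_ne_zero hm1 hc1)) hT0)
        (pow_ne_zero _ hden0))
    have hterm : ((starRingEnd ℂ) A + (starRingEnd ℂ) B) / (2 * (Complex.normSq (A + B) : ℂ))
          * ((Complex.normSq A : ℂ) - (Complex.normSq B : ℂ) + 2 - (Real.sqrt D : ℂ))
        = ((starRingEnd ℂ) A + (starRingEnd ℂ) B) * (μ₂ * (starRingEnd ℂ) μ₂) / 2 := by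
      rw [hKeyC, hNpC, div_mul_eq_mul_div, div_eq_div_iff h2N two_ne_zero]
      field_simp [hden0]
    rw [hterm, hA, hB]
    simp only [map_add, map_sub, map_mul, map_div₀, map_one, map_ofNat, Complex.conj_conj,
      hconjd]
    field_simp [hden0]
    rw [hd]
    ring
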